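/- For any k ≥ 1, if U is a semi-Clifford gate with U ∈ 𝒞ₖ, then U⁻¹ ∈ 𝒞ₖ. -/

import Mathlib

/-! Common framework: qubit gates, the Pauli group, the Clifford hierarchy,
permutation gates, Toffoli gates and staircase form, descending multiplications,
multilinear polynomial representations. -/

/-- Vectors in `𝔽₂ⁿ`, indexing computational basis states. -/
abbrev QV (n : ℕ) := Fin n → ZMod 2

/-- `n`-qubit gates: `2ⁿ × 2ⁿ` complex matrices indexed by `𝔽₂ⁿ`. -/
abbrev QMat (n : ℕ) := Matrix (QV n) (QV n) ℂ

/-- Standard basis vector `eᵢ` of `𝔽₂ⁿ`. -/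
def stdBasis (n : ℕ) (i : Fin n) : QV n := fun m => if m = i then 1 else 0

/-- The gate `X^u Z^z`, sending `|b⟩` to `(-1)^(z·b) |b+u⟩`. -/
noncomputable def XZGate (n : ℕ) (u z : QV n) : QMat n :=
  fun a b => if a = b + u then (-1 : ℂ) ^ (∑ i, (z i).val * (b i).val) else 0

/-- The Pauli group on `n` qubits: gates `c·P₁⊗⋯⊗Pₙ`, `c ∈ {±1, ±i}`,
`Pᵢ ∈ {I,X,Y,Z}`, equivalently phases times `X^u Z^z`. -/
def PauliGroup (n : ℕ) : Set (QMat n) :=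
  { P | ∃ (c : ℂ) (u z : QV n),
      (c = 1 ∨ c = -1 ∨ c = Complex.I ∨ c = -Complex.I) ∧ P = c • XZGate n u z }

/-- Level `k` of the Clifford hierarchy `𝒞ₖ` (level 1 is the Pauli group,
level 2 the Clifford group; level 0 is junk/empty). -/
def CliffordLevel (n : ℕ) : ℕ → Set (QMat n)
  | 0 => ∅
  | 1 => PauliGroup n
  | (k+2) => { U | U ∈ Matrix.unitaryGroup (QV n) ℂ ∧
      ∀ P ∈ PauliGroup n, U * P * star U ∈ CliffordLevel n (k+1) }

/-- The permutation gate of a permutation `f` of `𝔽₂ⁿ`: sends `|v⟩` to `|f v⟩`. -/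
noncomputable def permGate (n : ℕ) (f : QV n ≃ QV n) : QMat n :=
  fun a b => if a = f b then 1 else 0

/-- A diagonal gate. -/
def IsDiagonal (n : ℕ) (d : QMat n) : Prop := ∀ a b : QV n, a ≠ b → d a b = 0

/-- A gate is semi-Clifford if it equals `φ₁ d φ₂` for Clifford `φ₁, φ₂` and diagonal `d`. -/
def IsSemiClifford (n : ℕ) (U : QMat n) : Prop :=
  ∃ φ₁ d φ₂ : QMat n, φ₁ ∈ CliffordLevel n 2 ∧ φ₂ ∈ CliffordLevel n 2 ∧
    IsDiagonal n d ∧ U = φ₁ * d * φ₂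

/-- The underlying map of the Toffoli gate `TOF_{i,j,k}`: `v ↦ v + (vᵢvⱼ)·eₖ`. -/
def tofFun (n : ℕ) (i j k : Fin n) (v : QV n) : QV n :=
  fun m => if m = k then v m + v i * v j else v m

/-- A map on `𝔽₂ⁿ` is in staircase form if it is a product (applied left-to-right)
of pairwise distinct Toffoli gates `TOF_{i,j,k}` with `i<j<k` and with targets
nondecreasing in the order the gates are applied. -/
def IsStaircase (n : ℕ) (g : QV n → QV n) : Prop :=
  ∃ L : List (Fin n × Fin n × Fin n),
    L.Nodup ∧
    (∀ t ∈ L, t.1 < t.2.1 ∧ t.2.1 < t.2.2) ∧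
    List.Chain' (fun s t => s.2.2 ≤ t.2.2) L ∧
    g = fun v => L.foldl (fun w t => tofFun n t.1 t.2.1 t.2.2 w) v

/-- A descending multiplication on `𝔽₂ⁿ`: bilinear, associative, commutative,
`eᵢeᵢ = 0`, and for `i < j`, `eᵢeⱼ ∈ span{eₖ : k > j}`. -/
def IsDescendingMul (n : ℕ) (mul : QV n → QV n → QV n) : Prop :=
  (∀ u v w : QV n, mul (u + v) w = mul u w + mul v w) ∧
  (∀ u v w : QV n, mul u (v + w) = mul u v + mul u w) ∧
  (∀ u v w : QV n, mul (mul u v) w = mul u (mul v w)) ∧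
  (∀ u v : QV n, mul u v = mul v u) ∧
  (∀ i : Fin n, mul (stdBasis n i) (stdBasis n i) = 0) ∧
  (∀ i j : Fin n, i < j → ∀ m : Fin n, m ≤ j → mul (stdBasis n i) (stdBasis n j) m = 0)

/-- The product `∏_{i ∈ l} eᵢ` under a multiplication, for a list `l` (junk `0` on `[]`). -/
def dmProdList (n : ℕ) (mul : QV n → QV n → QV n) : List (Fin n) → QV n
  | [] => 0
  | [i] => stdBasis n i
  | i :: j :: rest => mul (stdBasis n i) (dmProdList n mul (j :: rest))

/-- The product `∏_{i ∈ T} eᵢ` under a multiplication. -/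
def dmProd (n : ℕ) (mul : QV n → QV n → QV n) (T : Finset (Fin n)) : QV n :=
  dmProdList n mul (T.sort (· ≤ ·))

/-- `g` is the map `∑_{i∈S} eᵢ ↦ ∑_{∅≠T⊆S} ∏_{i∈T} eᵢ` associated to a multiplication. -/
def dmPiSpec (n : ℕ) (mul : QV n → QV n → QV n) (g : QV n → QV n) : Prop :=
  ∀ S : Finset (Fin n),
    g (∑ i ∈ S, stdBasis n i) = ∑ T ∈ S.powerset.erase ∅, dmProd n mul T

/-- The bilinear extension of `eᵢeⱼ := g(eᵢ+eⱼ) + eᵢ + eⱼ`. -/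
def inducedMul (n : ℕ) (g : QV n → QV n) (u v : QV n) : QV n :=
  ∑ i : Fin n, ∑ j : Fin n,
    (u i * v j) • (g (stdBasis n i + stdBasis n j) + stdBasis n i + stdBasis n j)

/-- Coefficient of the monomial `∏_{i∈T} aᵢ` in the unique multilinear polynomial
over `𝔽₂` representing `g : 𝔽₂ⁿ → 𝔽₂` (Möbius inversion over `𝔽₂`). -/
def mlCoeff (n : ℕ) (g : QV n → ZMod 2) (T : Finset (Fin n)) : ZMod 2 :=
  ∑ R ∈ T.powerset, g (∑ i ∈ R, stdBasis n i)

/-- Strictly lower triangular matrix. -/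
def StrictLowerTri (n : ℕ) (A : Matrix (Fin n) (Fin n) (ZMod 2)) : Prop :=
  ∀ p q : Fin n, p ≤ q → A p q = 0

/-- Multiplication of basis vectors for the gate `U_k`: the basis of `𝔽₂^(2^k-1)` is
indexed by nonempty subsets `S ⊆ [k]`, encoded as indices `a` via the binary digits of
`a+1`; `e_S e_T = e_{S∪T}` if `S ∩ T = ∅` and `e_S e_T = 0` otherwise. -/
def ukBasisMul (k : ℕ) (a b : Fin (2 ^ k - 1)) : QV (2 ^ k - 1) :=
  if (a.val + 1) &&& (b.val + 1) = 0 then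
    (if h : a.val + b.val + 1 < 2 ^ k - 1 then stdBasis (2 ^ k - 1) ⟨a.val + b.val + 1, h⟩
     else 0)
  else 0

/-- The descending multiplication defining `U_k`, extended bilinearly. -/
def ukMul (k : ℕ) (u v : QV (2 ^ k - 1)) : QV (2 ^ k - 1) :=
  ∑ a : Fin (2 ^ k - 1), ∑ b : Fin (2 ^ k - 1), (u a * v b) • ukBasisMul k a b

section Aux

-- parity helpers
lemma neg_one_pow_mod_two (m : ℕ) : (-1:ℂ)^m = (-1)^(m % 2) := by
  conv_lhs => rw [← Nat.div_add_mod m 2]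
  rw [pow_add, pow_mul]
  norm_num

lemma neg_one_pow_congr_mod2 {m m' : ℕ} (h : m % 2 = m' % 2) : (-1:ℂ)^m = (-1:ℂ)^m' := by
  rw [neg_one_pow_mod_two m, neg_one_pow_mod_two m', h]

lemma qv_sum_parity (n : ℕ) (z b u : QV n) :
    (∑ i, (z i).val * ((b + u) i).val) % 2
      = ((∑ i, (z i).val * (b i).val) + ∑ i, (z i).val * (u i).val) % 2 := by
  have key : ∀ i : Fin n, (z i).val * ((b + u) i).val % 2
      = ((z i).val * (b i).val + (z i).val * (u i).val) % 2 := by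
    intro i
    show (z i).val * ((b i + u i).val) % 2 = _
    rw [ZMod.val_add, Nat.mul_mod, Nat.mod_mod_of_dvd _ dvd_rfl,
      ← Nat.mul_mod, Nat.mul_add]
  calc (∑ i, (z i).val * ((b + u) i).val) % 2
      = (∑ i, (z i).val * ((b + u) i).val % 2) % 2 := Finset.sum_nat_mod _ _ _
    _ = (∑ i, ((z i).val * (b i).val + (z i).val * (u i).val) % 2) % 2 := by
        simp only [key]
    _ = (∑ i, ((z i).val * (b i).val + (z i).val * (u i).val)) % 2 :=
        (Finset.sum_nat_mod _ _ _).symm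
    _ = _ := by rw [Finset.sum_add_distrib]

lemma eSign_add (n : ℕ) (z b u : QV n) :
    (-1:ℂ)^(∑ i, (z i).val * ((b + u) i).val)
      = (-1:ℂ)^(∑ i, (z i).val * (b i).val) * (-1:ℂ)^(∑ i, (z i).val * (u i).val) := by
  rw [← pow_add]; exact neg_one_pow_congr_mod2 (qv_sum_parity n z b u)

lemma qv_add_self (n : ℕ) (u : QV n) : u + u = 0 := by
  funext i; show u i + u i = 0; exact CharTwo.add_self_eq_zero _

lemma qv_eq_add_iff (n : ℕ) (a b u : QV n) : a = b + u ↔ b = a + u := by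
  constructor <;> rintro rfl <;> rw [add_assoc, qv_add_self, add_zero]

lemma neg_one_pow_mul_self (m : ℕ) : (-1:ℂ)^m * (-1:ℂ)^m = 1 := by
  rw [← pow_add, neg_one_pow_congr_mod2 (m' := 0) (by omega), pow_zero]

lemma star_XZGate (n : ℕ) (u z : QV n) :
    star (XZGate n u z)
      = ((-1:ℂ)^(∑ i, (z i).val * (u i).val)) • XZGate n u z := by
  ext a b
  simp only [Matrix.star_apply, XZGate, Matrix.smul_apply, smul_eq_mul]
  by_cases h : a = b + u
  · have hb : b = a + u := (qv_eq_add_iff n a b u).mp h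
    rw [if_pos hb, if_pos h]
    subst h
    rw [eSign_add, star_mul, star_pow, star_pow, star_neg, star_one]
  · have hb : ¬ b = a + u := fun hh => h ((qv_eq_add_iff n b a u).mp hh)
    rw [if_neg hb, if_neg h, star_zero, mul_zero]

lemma XZGate_mul_self (n : ℕ) (u z : QV n) :
    XZGate n u z * XZGate n u z
      = ((-1:ℂ)^(∑ i, (z i).val * (u i).val)) • (1 : QMat n) := by
  ext a c
  simp only [Matrix.mul_apply, XZGate, Matrix.smul_apply, Matrix.one_apply, smul_eq_mul]
  rw [Finset.sum_eq_single (c + u)]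
  · have hcu : c + u + u = c := by rw [add_assoc, qv_add_self, add_zero]
    rw [if_pos rfl, hcu]
    by_cases h : a = c
    · rw [if_pos h, if_pos h, eSign_add, mul_one]
      rw [mul_assoc, mul_comm ((-1:ℂ)^(∑ i, (z i).val * (u i).val)), ← mul_assoc,
        neg_one_pow_mul_self, one_mul]
    · rw [if_neg h, if_neg h, zero_mul, mul_zero]
  · intro b _ hb
    rw [if_neg hb, mul_zero]
  · intro h; exact absurd (Finset.mem_univ _) h

lemma XZGate_mul_star (n : ℕ) (u z : QV n) :
    XZGate n u z * star (XZGate n u z) = 1 := by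
  rw [star_XZGate, Matrix.mul_smul, XZGate_mul_self, smul_smul, neg_one_pow_mul_self, one_smul]

abbrev IsPhase (c : ℂ) : Prop := c = 1 ∨ c = -1 ∨ c = Complex.I ∨ c = -Complex.I

lemma phase_mul_star {c : ℂ} (hc : IsPhase c) : c * star c = 1 := by
  rcases hc with rfl|rfl|rfl|rfl <;>
    simp [Complex.star_def, Complex.conj_I, Complex.I_mul_I]

lemma phase_star {c : ℂ} (hc : IsPhase c) : IsPhase (star c) := by
  rcases hc with rfl|rfl|rfl|rfl <;> simp [IsPhase, Complex.star_def, Complex.conj_I]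

lemma phase_neg_one_pow (m : ℕ) : IsPhase ((-1:ℂ)^m) := by
  rcases Nat.even_or_odd m with h|h
  · left; exact h.neg_one_pow
  · right; left; exact h.neg_one_pow

lemma phase_mul {c d : ℂ} (hc : IsPhase c) (hd : IsPhase d) : IsPhase (c * d) := by
  rcases hc with rfl|rfl|rfl|rfl <;> rcases hd with rfl|rfl|rfl|rfl <;>
    simp [IsPhase, Complex.I_mul_I] <;> ring_nf <;>
    simp [IsPhase, Complex.I_sq, Complex.I_mul_I]

lemma pauli_mem_unitary {n : ℕ} {P : QMat n} (hP : P ∈ PauliGroup n) :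
    P ∈ Matrix.unitaryGroup (QV n) ℂ := by
  obtain ⟨c, u, z, hc, rfl⟩ := hP
  rw [Matrix.mem_unitaryGroup_iff]
  rw [star_smul, Matrix.smul_mul, Matrix.mul_smul, smul_smul, XZGate_mul_star]
  rw [phase_mul_star hc, one_smul]

lemma pauli_star {n : ℕ} {P : QMat n} (hP : P ∈ PauliGroup n) :
    star P ∈ PauliGroup n := by
  obtain ⟨c, u, z, hc, rfl⟩ := hP
  refine ⟨star c * (-1:ℂ)^(∑ i, (z i).val * (u i).val), u, z,
    phase_mul (phase_star hc) (phase_neg_one_pow _), ?_⟩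
  rw [star_smul, star_XZGate, smul_smul]

lemma pauli_inv {n : ℕ} {P : QMat n} (hP : P ∈ PauliGroup n) :
    P⁻¹ ∈ PauliGroup n := by
  rw [Matrix.inv_eq_right_inv (Matrix.mem_unitaryGroup_iff.mp (pauli_mem_unitary hP))]
  exact pauli_star hP

lemma pauli_finite (n : ℕ) : (PauliGroup n).Finite := by
  have h : PauliGroup n ⊆ (fun p : ℂ × QV n × QV n => p.1 • XZGate n p.2.1 p.2.2) ''
      (({1, -1, Complex.I, -Complex.I} : Set ℂ) ×ˢ (Set.univ : Set (QV n × QV n))) := by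
    rintro P ⟨c, u, z, hc, rfl⟩
    exact ⟨(c, u, z), ⟨by rcases hc with rfl|rfl|rfl|rfl <;> simp, trivial⟩, rfl⟩
  exact ((((Set.finite_singleton _).insert _).insert _ |>.insert _).prod
    Set.finite_univ).image _ |>.subset h


-- entrywise conjugation
noncomputable def mconj {n : ℕ} (M : QMat n) : QMat n := fun a b => star (M a b)

lemma mconj_apply {n : ℕ} (M : QMat n) (a b : QV n) : mconj M a b = star (M a b) := rfl

lemma mconj_mconj {n : ℕ} (M : QMat n) : mconj (mconj M) = M := by
  ext a b; simp [mconj_apply]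

lemma mconj_mul {n : ℕ} (A B : QMat n) : mconj (A * B) = mconj A * mconj B := by
  ext a b
  simp only [mconj_apply, Matrix.mul_apply, star_sum, star_mul']

lemma mconj_star {n : ℕ} (M : QMat n) : mconj (star M) = star (mconj M) := by
  ext a b; simp [mconj_apply, Matrix.star_apply]

lemma mconj_one {n : ℕ} : mconj (1 : QMat n) = 1 := by
  ext a b
  simp only [mconj_apply, Matrix.one_apply]
  split <;> simp

lemma mconj_unitary {n : ℕ} {U : QMat n} (hU : U ∈ Matrix.unitaryGroup (QV n) ℂ) :
    mconj U ∈ Matrix.unitaryGroup (QV n) ℂ := by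
  rw [Matrix.mem_unitaryGroup_iff] at hU ⊢
  rw [← mconj_star, ← mconj_mul, hU, mconj_one]

lemma mconj_smul {n : ℕ} (c : ℂ) (M : QMat n) : mconj (c • M) = star c • mconj M := by
  ext a b; simp [mconj_apply]

lemma mconj_XZGate (n : ℕ) (u z : QV n) : mconj (XZGate n u z) = XZGate n u z := by
  ext a b
  simp only [mconj_apply, XZGate]
  split <;> simp

lemma pauli_mconj {n : ℕ} {P : QMat n} (hP : P ∈ PauliGroup n) :
    mconj P ∈ PauliGroup n := by
  obtain ⟨c, u, z, hc, rfl⟩ := hP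
  exact ⟨star c, u, z, phase_star hc, by rw [mconj_smul, mconj_XZGate]⟩

lemma cliffordLevel_two_def (n : ℕ) :
    CliffordLevel n 2 = { U | U ∈ Matrix.unitaryGroup (QV n) ℂ ∧
      ∀ P ∈ PauliGroup n, U * P * star U ∈ PauliGroup n } := rfl

lemma clifford_star {n : ℕ} {φ : QMat n} (hφ : φ ∈ CliffordLevel n 2) :
    star φ ∈ CliffordLevel n 2 := by
  rw [cliffordLevel_two_def] at hφ ⊢
  obtain ⟨hu, hconj⟩ := hφ
  have hss : star φ * φ = 1 := Unitary.star_mul_self_of_mem hu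
  have hms : φ * star φ = 1 := Unitary.mul_star_self_of_mem hu
  have key : ∀ M : QMat n, star φ * (φ * M * star φ) * φ = M := by
    intro M
    calc star φ * (φ * M * star φ) * φ
        = (star φ * φ) * M * (star φ * φ) := by noncomm_ring
      _ = M := by rw [hss, one_mul, mul_one]
  refine ⟨Unitary.star_mem hu, ?_⟩
  intro P hP
  have hmap : Set.MapsTo (fun Q => φ * Q * star φ) (PauliGroup n) (PauliGroup n) :=
    fun Q hQ => hconj Q hQ
  have hinj : Set.InjOn (fun Q => φ * Q * star φ) (PauliGroup n) := by
    intro A _ B _ h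
    have h2 := congrArg (fun M => star φ * M * φ) h
    simp only at h2
    rwa [key A, key B] at h2
  have hbij := ((pauli_finite n).injOn_iff_bijOn_of_mapsTo hmap).mp hinj
  obtain ⟨Q, hQ, hQP⟩ := hbij.2.2 hP
  have hpq : star φ * P * φ = Q := by
    rw [← hQP]
    exact key Q
  rw [star_star, hpq]
  exact hQ

lemma clifford_mul_mem (n : ℕ) (m : ℕ) :
    ∀ φ W : QMat n, φ ∈ CliffordLevel n 2 → W ∈ CliffordLevel n (m + 2) →
      φ * W ∈ CliffordLevel n (m + 2) ∧ W * φ ∈ CliffordLevel n (m + 2) := by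
  induction m with
  | zero =>
    intro φ W hφ hW
    rw [cliffordLevel_two_def] at hφ hW ⊢
    obtain ⟨hu1, hc1⟩ := hφ
    obtain ⟨hu2, hc2⟩ := hW
    constructor
    · refine ⟨mul_mem hu1 hu2, ?_⟩
      intro P hP
      have : φ * W * P * star (φ * W) = φ * (W * P * star W) * star φ := by
        rw [star_mul]; noncomm_ring
      rw [this]
      exact hc1 _ (hc2 P hP)
    · refine ⟨mul_mem hu2 hu1, ?_⟩
      intro P hP
      have : W * φ * P * star (W * φ) = W * (φ * P * star φ) * star W := by
        rw [star_mul]; noncomm_ring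
      rw [this]
      exact hc2 _ (hc1 P hP)
  | succ m ih =>
    intro φ W hφ hW
    obtain ⟨hu2, hc2⟩ := hW
    have hu1 : φ ∈ Matrix.unitaryGroup (QV n) ℂ := hφ.1
    have hφ2 := hφ
    rw [cliffordLevel_two_def] at hφ2
    have hφs : star φ ∈ CliffordLevel n 2 := clifford_star hφ
    constructor
    · refine ⟨mul_mem hu1 hu2, ?_⟩
      intro P hP
      have he : φ * W * P * star (φ * W) = (φ * (W * P * star W)) * star φ := by
        rw [star_mul]; noncomm_ring
      rw [he]
      exact (ih (star φ) _ hφs ((ih φ _ hφ (hc2 P hP)).1)).2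
    · refine ⟨mul_mem hu2 hu1, ?_⟩
      intro P hP
      have he : W * φ * P * star (W * φ) = W * (φ * P * star φ) * star W := by
        rw [star_mul]; noncomm_ring
      rw [he]
      exact hc2 _ (hφ2.2 P hP)

lemma clifford_mconj (n : ℕ) : ∀ k : ℕ, ∀ U : QMat n,
    U ∈ CliffordLevel n k → mconj U ∈ CliffordLevel n k := by
  intro k
  induction k using Nat.strong_induction_on with
  | _ k ih =>
    match k with
    | 0 => intro U hU; exact absurd hU (Set.notMem_empty U)
    | 1 => intro U hU; exact pauli_mconj hU
    | (m+2) =>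
      intro U hU
      refine ⟨mconj_unitary hU.1, ?_⟩
      intro P hP
      have h1 : mconj U * P * star (mconj U) = mconj (U * mconj P * star U) := by
        rw [mconj_mul, mconj_mul, mconj_mconj, mconj_star]
      rw [h1]
      exact ih (m+1) (by omega) _ (hU.2 (mconj P) (pauli_mconj hP))

lemma diag_star_eq_mconj {n : ℕ} {d : QMat n} (hd : IsDiagonal n d) :
    star d = mconj d := by
  ext a b
  rw [Matrix.star_apply, mconj_apply]
  by_cases h : a = b
  · subst h; rfl
  · rw [hd a b h, hd b a (Ne.symm h), star_zero]

end Aux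

/-- For any `k ≥ 1`, the inverse of a semi-Clifford element of `𝒞ₖ`
is in `𝒞ₖ`. -/
theorem stmt11 (n k : ℕ) (hn : 1 ≤ n) (hk : 1 ≤ k) (U : QMat n)
    (hsc : IsSemiClifford n U) (hU : U ∈ CliffordLevel n k) :
    U⁻¹ ∈ CliffordLevel n k := by
  match k, hk with
  | 1, _ => exact pauli_inv hU
  | (m+2), _ =>
    obtain ⟨φ₁, d, φ₂, h1, h2, hdiag, rfl⟩ := hsc
    have hu1 : φ₁ ∈ Matrix.unitaryGroup (QV n) ℂ := h1.1
    have hu2 : φ₂ ∈ Matrix.unitaryGroup (QV n) ℂ := h2.1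
    have hs1 : star φ₁ ∈ CliffordLevel n 2 := clifford_star h1
    have hs2 : star φ₂ ∈ CliffordLevel n 2 := clifford_star h2
    have e1 : star φ₁ * φ₁ = 1 := Unitary.star_mul_self_of_mem hu1
    have e2 : φ₂ * star φ₂ = 1 := Unitary.mul_star_self_of_mem hu2
    have hdmem : d ∈ CliffordLevel n (m + 2) := by
      have step1 := (clifford_mul_mem n m (star φ₁) (φ₁ * d * φ₂) hs1 hU).1
      have step2 := (clifford_mul_mem n m (star φ₂) (star φ₁ * (φ₁ * d * φ₂)) hs2 step1).2
      have : star φ₁ * (φ₁ * d * φ₂) * star φ₂ = d := by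
        calc star φ₁ * (φ₁ * d * φ₂) * star φ₂
            = (star φ₁ * φ₁) * d * (φ₂ * star φ₂) := by noncomm_ring
          _ = d := by rw [e1, e2, one_mul, mul_one]
      rwa [this] at step2
    have hsd : star d ∈ CliffordLevel n (m + 2) := by
      rw [diag_star_eq_mconj hdiag]
      exact clifford_mconj n (m+2) _ hdmem
    have hinv : (φ₁ * d * φ₂)⁻¹ = star (φ₁ * d * φ₂) :=
      Matrix.inv_eq_right_inv (Matrix.mem_unitaryGroup_iff.mp hU.1)
    rw [hinv, star_mul, star_mul]
    exact (clifford_mul_mem n m (star φ₂) _ hs2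
      ((clifford_mul_mem n m (star φ₁) (star d) hs1 hsd).2)).1
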